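/- Let A be a noninvertible matrix of class S_n. Then p(A) = a(A) or p(A) = ∞ (i.e., every power A^ℓ is a partial isometry). -/

import Mathlib

open Matrix

noncomputable section

/-- An `ι`-by-`ι` complex matrix `A` is a *partial isometry* if `‖Ax‖ = ‖x‖` for every
vector `x` in the orthogonal complement of `ker A` (Euclidean structure). -/
def Matrix.IsPartialIsometry {ι : Type*} [Fintype ι] [DecidableEq ι]
    (A : Matrix ι ι ℂ) : Prop :=
  ∀ x ∈ (LinearMap.ker (Matrix.toEuclideanLin A))ᗮ, ‖Matrix.toEuclideanLin A x‖ = ‖x‖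

/-- The *power partial isometry index* `p(A)`: the supremum (in `ℕ∞`, possibly `⊤`) of the
nonnegative integers `j` such that `I, A, A², …, A^j` are all partial isometries. -/
def Matrix.pIndex {ι : Type*} [Fintype ι] [DecidableEq ι] (A : Matrix ι ι ℂ) : ℕ∞ :=
  sSup ((↑) '' {j : ℕ | ∀ i ≤ j, (A ^ i).IsPartialIsometry})

/-- The *ascent* `a(A)`: the smallest nonnegative integer `k` with `ker A^k = ker A^(k+1)`. -/
def Matrix.ascent {ι : Type*} [Fintype ι] [DecidableEq ι] (A : Matrix ι ι ℂ) : ℕ :=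
  sInf {k : ℕ | LinearMap.ker (Matrix.toEuclideanLin (A ^ k)) =
    LinearMap.ker (Matrix.toEuclideanLin (A ^ (k + 1)))}

/-- `A` is unitarily similar to `B` (allowing different, necessarily equipotent, index types):
`B = U* A U` for some unitary `U`. -/
def Matrix.UnitarilySimilarTo {ι κ : Type*} [Fintype ι] [Fintype κ] [DecidableEq ι]
    [DecidableEq κ] (A : Matrix ι ι ℂ) (B : Matrix κ κ ℂ) : Prop :=
  ∃ U : Matrix ι κ ℂ, Uᴴ * U = 1 ∧ U * Uᴴ = 1 ∧ B = Uᴴ * A * U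

/-- The `q`-by-`q` nilpotent Jordan block `J_q`. -/
def JordanBlock (q : ℕ) : Matrix (Fin q) (Fin q) ℂ :=
  Matrix.of fun a b => if (b : ℕ) = (a : ℕ) + 1 then 1 else 0

/-- `A` is of class `S_n`: a contraction whose eigenvalues all have moduli strictly
less than `1` and with `rank (1 - A*A) = 1`. -/
def Matrix.IsClassSn {n : ℕ} (A : Matrix (Fin n) (Fin n) ℂ) : Prop :=
  (∀ x : EuclideanSpace ℂ (Fin n), ‖Matrix.toEuclideanLin A x‖ ≤ ‖x‖) ∧
  (∀ z ∈ spectrum ℂ A, ‖z‖ < 1) ∧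
  (1 - Aᴴ * A).rank = 1



section Aux

open FiniteDimensional LinearMap Submodule Module

variable {n : ℕ}

local notation "⟪" x ", " y "⟫" => @inner ℂ _ _ x y

lemma toEuclideanLin_one' : Matrix.toEuclideanLin (1 : Matrix (Fin n) (Fin n) ℂ) = 1 := by
  rw [Matrix.toEuclideanLin_eq_toLin, Matrix.toLin_one]
  rfl

lemma toEuclideanLin_mul' (A B : Matrix (Fin n) (Fin n) ℂ) :
    Matrix.toEuclideanLin (A * B) = Matrix.toEuclideanLin A * Matrix.toEuclideanLin B := by
  rw [Matrix.toEuclideanLin_eq_toLin, Matrix.toLin_mul _ (PiLp.basisFun 2 ℂ (Fin n)) _]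
  rfl

lemma toEuclideanLin_pow' (A : Matrix (Fin n) (Fin n) ℂ) (k : ℕ) :
    Matrix.toEuclideanLin (A ^ k) = Matrix.toEuclideanLin A ^ k := by
  induction k with
  | zero => simpa using toEuclideanLin_one'
  | succ k ih => rw [pow_succ, toEuclideanLin_mul', ih, pow_succ]

lemma rank_toEuclideanLin' (M : Matrix (Fin n) (Fin n) ℂ) :
    M.rank = finrank ℂ (LinearMap.range (Matrix.toEuclideanLin M)) := by
  rw [Matrix.rank_eq_finrank_range_toLin M (PiLp.basisFun 2 ℂ (Fin n)) (PiLp.basisFun 2 ℂ (Fin n)),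
    Matrix.toEuclideanLin_eq_toLin]

variable (T : EuclideanSpace ℂ (Fin n) →ₗ[ℂ] EuclideanSpace ℂ (Fin n))
  (d : EuclideanSpace ℂ (Fin n))

lemma adjoint_pow' (k : ℕ) : LinearMap.adjoint (T ^ k) = (LinearMap.adjoint T) ^ k := by
  rw [← LinearMap.star_eq_adjoint, ← LinearMap.star_eq_adjoint, star_pow]

/-- Master identity: `(T^j)* (T^j) y = y - ∑_{i<j} ⟪(T*)^i d, y⟫ • (T*)^i d`. -/
lemma master (hd1 : ∀ y, LinearMap.adjoint T (T y) = y - ⟪d, y⟫ • d) (j : ℕ)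
    (y : EuclideanSpace ℂ (Fin n)) :
    LinearMap.adjoint (T ^ j) ((T ^ j) y) =
      y - ∑ i ∈ Finset.range j,
        ⟪((LinearMap.adjoint T) ^ i) d, y⟫ • ((LinearMap.adjoint T) ^ i) d := by
  induction j generalizing y with
  | zero =>
    simp only [pow_zero, Finset.range_zero, Finset.sum_empty, sub_zero,
      ← LinearMap.star_eq_adjoint, star_one, Module.End.one_apply]
  | succ j ih =>
    have hadj : LinearMap.adjoint (T ^ (j + 1)) =
        LinearMap.adjoint T * LinearMap.adjoint (T ^ j) := by
      rw [pow_succ, ← LinearMap.star_eq_adjoint, ← LinearMap.star_eq_adjoint,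
        ← LinearMap.star_eq_adjoint, StarMul.star_mul]
    have happ : (T ^ (j + 1)) y = (T ^ j) (T y) := by
      rw [pow_succ]; rfl
    rw [hadj, happ, Module.End.mul_apply, ih (T y), map_sub, hd1 y, map_sum]
    rw [Finset.sum_range_succ']
    simp only [_root_.map_smul, pow_zero, Module.End.one_apply]
    have hterm : ∀ i, ⟪((LinearMap.adjoint T) ^ i) d, T y⟫ •
        (LinearMap.adjoint T) (((LinearMap.adjoint T) ^ i) d)
        = ⟪((LinearMap.adjoint T) ^ (i + 1)) d, y⟫ • ((LinearMap.adjoint T) ^ (i + 1)) d := by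
      intro i
      have h1 : (LinearMap.adjoint T) (((LinearMap.adjoint T) ^ i) d)
          = ((LinearMap.adjoint T) ^ (i + 1)) d := by
        rw [pow_succ']; rfl
      rw [← h1, LinearMap.adjoint_inner_left]
    simp only [hterm]
    abel

lemma inner_pow_eq (hd1 : ∀ y, LinearMap.adjoint T (T y) = y - ⟪d, y⟫ • d) (j : ℕ)
    (x y : EuclideanSpace ℂ (Fin n)) :
    ⟪(T ^ j) x, (T ^ j) y⟫ = ⟪x, y⟫ - ∑ i ∈ Finset.range j,
      ⟪((LinearMap.adjoint T) ^ i) d, y⟫ * ⟪x, ((LinearMap.adjoint T) ^ i) d⟫ := by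
  have h := congrArg (fun z => ⟪x, z⟫) (master T d hd1 j y)
  simp only [LinearMap.adjoint_inner_right, inner_sub_right, inner_sum, inner_smul_right] at h
  exact h

lemma norm_pow_sq (hd1 : ∀ y, LinearMap.adjoint T (T y) = y - ⟪d, y⟫ • d) (j : ℕ)
    (x : EuclideanSpace ℂ (Fin n)) :
    ‖(T ^ j) x‖ ^ 2 = ‖x‖ ^ 2 - ∑ i ∈ Finset.range j,
      Complex.normSq ⟪((LinearMap.adjoint T) ^ i) d, x⟫ := by
  have h := inner_pow_eq T d hd1 j x x
  rw [inner_self_eq_norm_sq_to_K, inner_self_eq_norm_sq_to_K] at h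
  have hterm : ∀ i ∈ Finset.range j, ⟪((LinearMap.adjoint T) ^ i) d, x⟫ *
      ⟪x, ((LinearMap.adjoint T) ^ i) d⟫
      = (Complex.normSq ⟪((LinearMap.adjoint T) ^ i) d, x⟫ : ℂ) := by
    intro i _
    rw [← inner_conj_symm x (((LinearMap.adjoint T) ^ i) d), Complex.mul_conj]
  rw [Finset.sum_congr rfl hterm] at h
  have h2 := congrArg Complex.re h
  push_cast at h2
  simpa [← Complex.ofReal_pow] using h2

lemma finrank_ker_pow_succ_le (j : ℕ) :
    finrank ℂ (LinearMap.ker (T ^ (j + 1))) ≤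
      finrank ℂ (LinearMap.ker (T ^ j)) + finrank ℂ (LinearMap.ker T) := by
  set K := LinearMap.ker (T ^ (j + 1)) with hK
  let f : K →ₗ[ℂ] EuclideanSpace ℂ (Fin n) := (T ^ j).comp K.subtype
  have h1 : finrank ℂ (LinearMap.range f) + finrank ℂ (LinearMap.ker f) = finrank ℂ K :=
    LinearMap.finrank_range_add_finrank_ker f
  have h2 : LinearMap.range f ≤ LinearMap.ker T := by
    rintro _ ⟨⟨x, hx⟩, rfl⟩
    simp only [LinearMap.mem_ker]
    have : (T ^ (j + 1)) x = 0 := hx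
    rw [pow_succ'] at this
    exact this
  have h3 : finrank ℂ (LinearMap.ker f) ≤ finrank ℂ (LinearMap.ker (T ^ j)) := by
    rw [← Submodule.finrank_map_subtype_eq K (LinearMap.ker f)]
    apply Submodule.finrank_mono
    rintro _ ⟨⟨x, hx⟩, hker, rfl⟩
    exact hker
  have h4 : finrank ℂ (LinearMap.range f) ≤ finrank ℂ (LinearMap.ker T) :=
    Submodule.finrank_mono h2
  omega

end Aux


local notation "⟪" x ", " y "⟫" => @inner ℂ _ _ x y


open LinearMap Submodule Module Filter
open scoped Matrix.Norms.L2Operator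

set_option maxHeartbeats 2000000 in
/-- **Proposition 3.1 (b).** If `A` is a noninvertible matrix of class `S_n`, then
`p(A) = a(A)` or `p(A) = ∞` (i.e. every power of `A` is a partial isometry). -/
theorem pIndex_eq_ascent_or_top_of_isClassSn (n : ℕ) (A : Matrix (Fin n) (Fin n) ℂ)
    (hA : A.IsClassSn) (hni : ¬ IsUnit A) :
    A.pIndex = (A.ascent : ℕ∞) ∨
      (A.pIndex = ⊤ ∧ ∀ ℓ : ℕ, 1 ≤ ℓ → (A ^ ℓ).IsPartialIsometry) := by
  classical
  obtain ⟨hcontr, hspec, hrank⟩ := hA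
  set T := Matrix.toEuclideanLin A with hTdef
  set SL := Matrix.toEuclideanLin (1 - Aᴴ * A) with hSLdef
  have hSLeq : ∀ y, SL y = y - LinearMap.adjoint T (T y) := by
    intro y
    rw [hSLdef, map_sub, toEuclideanLin_one', toEuclideanLin_mul',
      Matrix.toEuclideanLin_conjTranspose_eq_adjoint, hTdef]
    simp [LinearMap.sub_apply, Module.End.mul_apply]
  have hSLinner : ∀ x y, ⟪x, SL y⟫ = ⟪x, y⟫ - ⟪T x, T y⟫ := by
    intro x y
    rw [hSLeq, inner_sub_right, LinearMap.adjoint_inner_right]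
  have hsymm : ∀ x y, ⟪SL x, y⟫ = ⟪x, SL y⟫ := by
    intro x y
    rw [← inner_conj_symm (SL x) y, hSLinner y x, map_sub, inner_conj_symm, inner_conj_symm,
      hSLinner]
  have hrk : Module.finrank ℂ (LinearMap.range SL) = 1 := by
    rw [hSLdef, ← rank_toEuclideanLin']; exact hrank
  have hrngne : LinearMap.range SL ≠ ⊥ := by
    intro h; rw [h] at hrk; simp at hrk
  obtain ⟨u, humem, hune⟩ := Submodule.exists_mem_ne_zero_of_ne_bot hrngne
  have hspan : (ℂ ∙ u) = LinearMap.range SL := by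
    apply Submodule.eq_of_le_of_finrank_le
    · rw [Submodule.span_singleton_le_iff_mem]; exact humem
    · rw [hrk, finrank_span_singleton hune]
  have hmemspan : ∀ y, SL y ∈ (ℂ ∙ u) := by
    intro y; rw [hspan]; exact LinearMap.mem_range_self SL y
  have hinner_self : ∀ w : EuclideanSpace ℂ (Fin n), ⟪w, w⟫ = ((‖w‖ ^ 2 : ℝ) : ℂ) := by
    intro w; rw [inner_self_eq_norm_sq_to_K]; norm_num
  have hnrm_ne : ((‖u‖ ^ 2 : ℝ) : ℂ) ≠ 0 := by
    exact_mod_cast pow_ne_zero 2 (norm_ne_zero_iff.mpr hune)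
  have step1 : ∀ y, SL y = (⟪u, SL y⟫ / ((‖u‖ ^ 2 : ℝ) : ℂ)) • u := by
    intro y
    obtain ⟨e, he⟩ := Submodule.mem_span_singleton.mp (hmemspan y)
    rw [← he, inner_smul_right, hinner_self, mul_div_assoc, div_self hnrm_ne, mul_one]
  set t : ℝ := ‖u‖ ^ 2 - ‖T u‖ ^ 2 with htdef
  have ht0 : 0 ≤ t := by
    have h1 := hcontr u
    have h2 : ‖T u‖ ^ 2 ≤ ‖u‖ ^ 2 := by nlinarith [norm_nonneg (T u)]
    rw [htdef]; linarith
  have hcoeff : ⟪u, SL u⟫ = ((t : ℝ) : ℂ) := by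
    rw [hSLinner u u, hinner_self, hinner_self, htdef]
    push_cast
    ring
  have step3 : SL u = ((t / ‖u‖ ^ 2 : ℝ) : ℂ) • u := by
    rw [step1 u, hcoeff]
    congr 1
    push_cast
    ring
  have htpos : 0 < t := by
    rcases ht0.lt_or_eq with h | h
    · exact h
    · exfalso
      have hSLu : SL u = 0 := by rw [step3, ← h]; simp
      have hall : ∀ y, SL y = 0 := by
        intro y
        rw [step1 y, ← hsymm, hSLu, inner_zero_left, zero_div, zero_smul]
      obtain ⟨w, hw⟩ := humem
      exact hune (by rw [← hw, hall])
  set s : ℝ := Real.sqrt t / ‖u‖ ^ 2 with hsdef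
  set d : EuclideanSpace ℂ (Fin n) := ((s : ℝ) : ℂ) • u with hddef
  have hd : ∀ y, SL y = ⟪d, y⟫ • d := by
    intro y
    have hSLuy : ⟪u, SL y⟫ = ((t / ‖u‖ ^ 2 : ℝ) : ℂ) * ⟪u, y⟫ := by
      rw [← hsymm, step3, inner_smul_left, Complex.conj_ofReal]
    rw [step1 y, hSLuy, hddef, inner_smul_left, Complex.conj_ofReal, smul_smul]
    congr 1
    have hs2 : (s : ℂ) * ⟪u, y⟫ * (s : ℂ) = ((s * s : ℝ) : ℂ) * ⟪u, y⟫ := by push_cast; ring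
    rw [hs2]
    have hss : s * s = t / ‖u‖ ^ 2 / ‖u‖ ^ 2 := by
      rw [hsdef, div_mul_div_comm, Real.mul_self_sqrt ht0, div_div]
    rw [hss]
    push_cast
    ring
  have hd1 : ∀ y, LinearMap.adjoint T (T y) = y - ⟪d, y⟫ • d := by
    intro y
    have h := (hSLeq y).symm.trans (hd y)
    rw [← h, sub_sub_cancel]
  -- nontrivial kernel
  have hdet : A.det = 0 := by
    by_contra h
    exact hni ((Matrix.isUnit_iff_isUnit_det A).mpr (isUnit_iff_ne_zero.mpr h))
  obtain ⟨vv, hvv0, hvv⟩ := (Matrix.exists_mulVec_eq_zero_iff).mpr hdet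
  set x0 : EuclideanSpace ℂ (Fin n) := (WithLp.equiv 2 _).symm vv with hx0def
  have hx0 : T x0 = 0 := by
    rw [hTdef, hx0def]; show WithLp.toLp 2 (A *ᵥ vv) = 0; rw [hvv]
    rfl
  have hx0ne : x0 ≠ 0 := by
    intro h
    apply hvv0
    have := congrArg (WithLp.equiv 2 (Fin n → ℂ)) h
    simpa [hx0def] using this
  have hxd : x0 = ⟪d, x0⟫ • d := by
    have h := hd1 x0
    rw [hx0, map_zero] at h
    exact (sub_eq_zero.mp h.symm)
  have hc0 : ⟪d, x0⟫ ≠ 0 := by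
    intro h; rw [h, zero_smul] at hxd; exact hx0ne hxd
  have hTd : T d = 0 := by
    have h := congrArg T hxd
    rw [hx0, _root_.map_smul] at h
    exact (smul_eq_zero.mp h.symm).resolve_left hc0
  have hdne : d ≠ 0 := by
    intro h; rw [h, smul_zero] at hxd; exact hx0ne hxd
  have hkerT : LinearMap.ker T = ℂ ∙ d := by
    apply le_antisymm
    · intro x hx
      have h := hd1 x
      rw [LinearMap.mem_ker.mp hx, map_zero] at h
      have hx2 : x = ⟪d, x⟫ • d := sub_eq_zero.mp h.symm
      exact Submodule.mem_span_singleton.mpr ⟨⟪d, x⟫, hx2.symm⟩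
    · rw [Submodule.span_singleton_le_iff_mem]
      exact LinearMap.mem_ker.mpr hTd
  have hkerT1 : Module.finrank ℂ (LinearMap.ker T) = 1 := by
    rw [hkerT]; exact finrank_span_singleton hdne
  -- kernel chain
  set K : ℕ → Submodule ℂ (EuclideanSpace ℂ (Fin n)) := fun j => LinearMap.ker (T ^ j) with hKdef
  have hK0 : K 0 = ⊥ := by
    simp [hKdef, Module.End.one_eq_id]
  have hKmono : ∀ j, K j ≤ K (j + 1) := by
    intro j x hx
    have hx' : (T ^ j) x = 0 := hx
    show (T ^ (j + 1)) x = 0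
    rw [pow_succ', Module.End.mul_apply, hx', map_zero]
  have hstep : ∀ k, K k = K (k + 1) → K (k + 1) = K (k + 2) := by
    intro k h
    apply le_antisymm (hKmono _)
    intro x hx
    have h1 : (T ^ (k + 2)) x = 0 := hx
    have h2 : (T ^ (k + 1)) (T x) = 0 := by
      rw [← Module.End.mul_apply, ← pow_succ]
      exact h1
    have h3 : T x ∈ K (k + 1) := h2
    have h4 : T x ∈ K k := by rwa [h] 
    show (T ^ (k + 1)) x = 0
    rw [pow_succ, Module.End.mul_apply]
    exact h4
  -- ascent
  set a := A.ascent with hadef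
  have hsetEq : {k : ℕ | LinearMap.ker (Matrix.toEuclideanLin (A ^ k)) =
      LinearMap.ker (Matrix.toEuclideanLin (A ^ (k + 1)))} = {k : ℕ | K k = K (k + 1)} := by
    ext k
    simp only [Set.mem_setOf_eq, toEuclideanLin_pow', ← hTdef, hKdef]
  have hanonempty : ∃ k, K k = K (k + 1) := by
    by_contra hcon
    push_neg at hcon
    have hlt : ∀ k, k ≤ Module.finrank ℂ (K k) := by
      intro k
      induction k with
      | zero => exact Nat.zero_le _
      | succ k ih =>
        have hlt2 : K k < K (k + 1) := lt_of_le_of_ne (hKmono k) (hcon k)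
        have := Submodule.finrank_lt_finrank_of_lt hlt2
        omega
    have h1 := hlt (n + 1)
    have h2 : Module.finrank ℂ (K (n + 1)) ≤ n := by
      have h3 := Submodule.finrank_le (K (n + 1))
      rwa [finrank_euclideanSpace_fin] at h3
    omega
  have haspec : K a = K (a + 1) ∧ ∀ k, K k = K (k + 1) → a ≤ k := by
    rw [hadef]
    unfold Matrix.ascent
    rw [hsetEq]
    exact ⟨Nat.sInf_mem hanonempty, fun k hk => Nat.sInf_le hk⟩
  obtain ⟨haeq, hamin⟩ := haspec
  have hchain' : ∀ m, K (a + m) = K (a + m + 1) := by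
    intro m
    induction m with
    | zero => exact haeq
    | succ m ih => exact hstep (a + m) ih
  have hchain : ∀ m, K (a + m) = K a := by
    intro m
    induction m with
    | zero => rfl
    | succ m ih => rw [← ih]; exact (hchain' m).symm
  have hstab : ∀ j, a ≤ j → K j = K a := by
    intro j hj
    have := hchain (j - a)
    rwa [Nat.add_sub_cancel' hj] at this
  have dimK : ∀ j, j ≤ a → Module.finrank ℂ (K j) = j := by
    intro j
    induction j with
    | zero => intro _; rw [hK0]; simp
    | succ j ih =>
      intro hj
      have h1 : Module.finrank ℂ (K j) = j := ih (by omega)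
      have hne : K j ≠ K (j + 1) := by
        intro h
        have := hamin j h
        omega
      have hlt2 : K j < K (j + 1) := lt_of_le_of_ne (hKmono j) hne
      have h2 := Submodule.finrank_lt_finrank_of_lt hlt2
      have h3 := finrank_ker_pow_succ_le T j
      rw [hkerT1] at h3
      have h4 : Module.finrank ℂ (K (j + 1)) ≤ Module.finrank ℂ (K j) + 1 := h3
      omega
  have han : a ≤ n := by
    have h1 := dimK a le_rfl
    have h2 := Submodule.finrank_le (K a)
    rw [finrank_euclideanSpace_fin] at h2
    omega
  -- the vectors v i
  set v : ℕ → EuclideanSpace ℂ (Fin n) := fun i => ((LinearMap.adjoint T) ^ i) d with hvdef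
  have hvK : ∀ j, j ≤ a → ∀ i, i < j → v i ∈ K j := by
    intro j hj
    have hspanle : K j ≤ Submodule.span ℂ (Set.range (fun i : Fin j => v i)) := by
      intro y hy
      have hy0 : (T ^ j) y = 0 := hy
      have hm := master T d hd1 j y
      rw [hy0, map_zero] at hm
      have hy2 : y = ∑ i ∈ Finset.range j, ⟪v i, y⟫ • v i := sub_eq_zero.mp hm.symm
      rw [hy2]
      apply Submodule.sum_mem
      intro i hi
      apply Submodule.smul_mem
      exact Submodule.subset_span ⟨⟨i, Finset.mem_range.mp hi⟩, rfl⟩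
    have hfr : Module.finrank ℂ
        (Submodule.span ℂ (Set.range (fun i : Fin j => v i))) ≤ j := by
      have h1 := finrank_range_le_card (R := ℂ) (fun i : Fin j => v i)
      unfold Set.finrank at h1
      simpa using h1
    have heq : K j = Submodule.span ℂ (Set.range (fun i : Fin j => v i)) := by
      apply Submodule.eq_of_le_of_finrank_le hspanle
      rw [dimK j hj]
      exact hfr
    intro i hi
    rw [heq]
    exact Submodule.subset_span ⟨⟨i, hi⟩, rfl⟩
  -- partial isometry criterion
  have hPIdef : ∀ j, (A ^ j).IsPartialIsometry ↔
      (∀ x ∈ (K j)ᗮ, ‖(T ^ j) x‖ = ‖x‖) := by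
    intro j
    unfold Matrix.IsPartialIsometry
    rw [toEuclideanLin_pow', ← hTdef]
  have hPIle : ∀ j, j ≤ a → (A ^ j).IsPartialIsometry := by
    intro j hj
    rw [hPIdef]
    intro x hx
    have h := norm_pow_sq T d hd1 j x
    have hz : ∀ i ∈ Finset.range j, Complex.normSq ⟪v i, x⟫ = 0 := by
      intro i hi
      have hvi := hvK j hj i (Finset.mem_range.mp hi)
      have hz2 : ⟪v i, x⟫ = 0 := (Submodule.mem_orthogonal (K j) x).mp hx (v i) hvi
      rw [hz2]
      simp
    rw [Finset.sum_eq_zero hz, sub_zero] at h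
    calc ‖(T ^ j) x‖ = Real.sqrt (‖(T ^ j) x‖ ^ 2) := (Real.sqrt_sq (norm_nonneg _)).symm
      _ = Real.sqrt (‖x‖ ^ 2) := by rw [h]
      _ = ‖x‖ := Real.sqrt_sq (norm_nonneg _)
  rcases Nat.lt_or_ge a n with hcase | hcase
  · -- a < n : p(A) = a
    have hnotPI : ¬ (A ^ (a + 1)).IsPartialIsometry := by
      intro hPI
      rw [hPIdef] at hPI
      have h1 : ∀ x ∈ (K (a + 1))ᗮ, ⟪v a, x⟫ = 0 := by
        intro x hx
        have h := norm_pow_sq T d hd1 (a + 1) x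
        rw [hPI x hx] at h
        have hsum : ∑ i ∈ Finset.range (a + 1), Complex.normSq ⟪v i, x⟫ = 0 := by linarith
        have hnn : ∀ i ∈ Finset.range (a + 1), 0 ≤ Complex.normSq ⟪v i, x⟫ :=
          fun i _ => Complex.normSq_nonneg _
        have h2 := (Finset.sum_eq_zero_iff_of_nonneg hnn).mp hsum a
          (Finset.self_mem_range_succ a)
        exact Complex.normSq_eq_zero.mp h2
      have h2 : v a ∈ (K (a + 1))ᗮ := by
        rw [Submodule.mem_orthogonal]
        intro w hw
        have hw' : w ∈ K a := by rwa [haeq]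
        have hTw : (T ^ a) w = 0 := hw'
        have hva : v a = LinearMap.adjoint (T ^ a) d := by
          rw [hvdef, adjoint_pow']
        rw [← inner_conj_symm, hva, LinearMap.adjoint_inner_left, hTw, inner_zero_right,
          map_zero]
      have hva0 : v a = 0 := inner_self_eq_zero.mp (h1 (v a) h2)
      have hvge : ∀ i, a ≤ i → v i = 0 := by
        intro i hi
        have h3 : v i = ((LinearMap.adjoint T) ^ (i - a)) (v a) := by
          rw [hvdef]
          show ((LinearMap.adjoint T) ^ i) d = _
          rw [← Module.End.mul_apply, ← pow_add]
          congr 2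
          omega
        rw [h3, hva0, map_zero]
      have hKane : K a ≠ ⊤ := by
        intro h
        have h1' := dimK a le_rfl
        rw [h, finrank_top, finrank_euclideanSpace_fin] at h1'
        omega
      have hperpne : (K a)ᗮ ≠ ⊥ := by
        rwa [Ne, Submodule.orthogonal_eq_bot_iff]
      obtain ⟨x, hxmem, hxne⟩ := Submodule.exists_mem_ne_zero_of_ne_bot hperpne
      have hiso : ∀ j, ‖(T ^ j) x‖ = ‖x‖ := by
        intro j
        have h := norm_pow_sq T d hd1 j x
        have hz : ∀ i ∈ Finset.range j, Complex.normSq ⟪v i, x⟫ = 0 := by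
          intro i _
          rcases Nat.lt_or_ge i a with hia | hia
          · have hvi : v i ∈ K a := hvK a le_rfl i hia
            have hz2 : ⟪v i, x⟫ = 0 := (Submodule.mem_orthogonal (K a) x).mp hxmem (v i) hvi
            rw [hz2]; simp
          · rw [hvge i hia]; simp
        rw [Finset.sum_eq_zero hz, sub_zero] at h
        calc ‖(T ^ j) x‖ = Real.sqrt (‖(T ^ j) x‖ ^ 2) := (Real.sqrt_sq (norm_nonneg _)).symm
          _ = Real.sqrt (‖x‖ ^ 2) := by rw [h]
          _ = ‖x‖ := Real.sqrt_sq (norm_nonneg _)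
      -- Gelfand contradiction
      haveI : CompleteSpace (Matrix (Fin n) (Fin n) ℂ) := FiniteDimensional.complete ℂ _
      have hspec0 : (0 : ℂ) ∈ spectrum ℂ A := (spectrum.zero_mem_iff (R := ℂ)).mpr hni
      obtain ⟨z, hz, hzeq⟩ := spectrum.exists_nnnorm_eq_spectralRadius_of_nonempty
        (⟨0, hspec0⟩ : (spectrum ℂ A).Nonempty)
      have hrlt : spectralRadius ℂ A < 1 := by
        rw [← hzeq]
        have := hspec z hz
        exact_mod_cast this
      have htend := spectrum.pow_nnnorm_pow_one_div_tendsto_nhds_spectralRadius A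
      have hev : ∀ᶠ j : ℕ in Filter.atTop,
          (‖A ^ j‖₊ : ENNReal) ^ (1 / (j : ℝ)) < 1 := htend.eventually_lt_const hrlt
      obtain ⟨j, hjlt, hj1⟩ := (hev.and (Filter.eventually_ge_atTop 1)).exists
      have hnorm : ‖A ^ j‖ < 1 := by
        by_contra hcon
        push_neg at hcon
        have h1' : (1 : ENNReal) ≤ (‖A ^ j‖₊ : ENNReal) := by
          exact_mod_cast hcon
        have h2' : (1 : ENNReal) ≤ (‖A ^ j‖₊ : ENNReal) ^ (1 / (j : ℝ)) := by
          rw [← ENNReal.one_rpow (1 / (j : ℝ))]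
          exact ENNReal.rpow_le_rpow h1' (by positivity)
        exact absurd hjlt (not_lt.mpr h2')
      have hTj : ‖(T ^ j) x‖ ≤ ‖A ^ j‖ * ‖x‖ := by
        have heq2 : (T ^ j) x = Matrix.toEuclideanLin (A ^ j) x := by
          rw [toEuclideanLin_pow', ← hTdef]
        rw [heq2]
        exact Matrix.l2_opNorm_mulVec (A ^ j) x
      rw [hiso j] at hTj
      have hxpos : 0 < ‖x‖ := norm_pos_iff.mpr hxne
      nlinarith
    left
    have hmemS : a ∈ {j : ℕ | ∀ i ≤ j, (A ^ i).IsPartialIsometry} :=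
      fun i hi => hPIle i hi
    have hbound : ∀ j ∈ {j : ℕ | ∀ i ≤ j, (A ^ i).IsPartialIsometry}, j ≤ a := by
      intro j hj
      by_contra hcon
      exact hnotPI (hj (a + 1) (by omega))
    unfold Matrix.pIndex
    apply le_antisymm
    · apply sSup_le
      rintro b ⟨j, hjS, rfl⟩
      exact_mod_cast hbound j hjS
    · exact le_sSup ⟨a, hmemS, rfl⟩
  · -- a = n : all powers are partial isometries
    have haneq : a = n := le_antisymm han hcase
    have hKtop : K a = ⊤ := by
      apply Submodule.eq_top_of_finrank_eq
      rw [dimK a le_rfl, haneq, finrank_euclideanSpace_fin]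
    have hallPI : ∀ j, (A ^ j).IsPartialIsometry := by
      intro j
      rcases le_or_gt j a with hj | hj
      · exact hPIle j hj
      · rw [hPIdef]
        intro x hx
        have hKj : K j = K a := hstab j hj.le
        rw [hKj, hKtop, Submodule.top_orthogonal_eq_bot] at hx
        have hx0' : x = 0 := (Submodule.mem_bot ℂ).mp hx
        rw [hx0', map_zero]
    right
    refine ⟨?_, fun ℓ _ => hallPI ℓ⟩
    unfold Matrix.pIndex
    rw [sSup_eq_top]
    intro b hb
    lift b to ℕ using hb.ne
    exact ⟨((b + 1 : ℕ) : ℕ∞), ⟨b + 1, fun i _ => hallPI i, rfl⟩,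
      by exact_mod_cast Nat.lt_succ_self b⟩



end
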